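/- Let F_1, …, F_N : ℝ^d → ℝ be convex and differentiable with L_F-Lipschitz gradients (with respect to the Euclidean norm), let F = (1/N)·Σ_{i=1}^N F_i, and let w* be a global minimizer of F. Then for every w ∈ ℝ^d, (1/N)·Σ_{i=1}^N ‖∇F_i(w) − ∇F(w)‖₂² ≤ 4·L_F·(F(w) − F(w*)) + 2·σ_F², where σ_F² := (1/N)·Σ_{i=1}^N ‖∇F_i(w*)‖₂². -/

import Mathlib

open RealInnerProductSpace

section Aux

variable {E : Type*} [NormedAddCommGroup E] [InnerProductSpace ℝ E] [CompleteSpace E]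

lemma aux_line_hasDerivAt (f : E → ℝ) (x v : E) (t : ℝ) (G : E)
    (hf : HasGradientAt f G (x + t • v)) :
    HasDerivAt (fun s : ℝ => f (x + s • v)) ⟪G, v⟫ t := by
  have hc : HasDerivAt (fun s : ℝ => x + s • v) v t := by
    simpa using ((hasDerivAt_id t).smul_const v).const_add x
  have := hf.hasFDerivAt.comp_hasDerivAt t hc
  simpa [InnerProductSpace.toDual_apply_apply, Function.comp_def] using this

lemma aux_grad_ineq (f : E → ℝ) (g : E → E) (hconv : ConvexOn ℝ Set.univ f)
    (hdiff : ∀ x, HasGradientAt f (g x) x) (x y : E) :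
    f x + ⟪g x, y - x⟫ ≤ f y := by
  set v := y - x with hv
  have hφ : ConvexOn ℝ Set.univ (fun s : ℝ => f (x + s • v)) := by
    have := hconv.comp_affineMap (AffineMap.lineMap x y : ℝ →ᵃ[ℝ] E)
    simp only [Set.preimage_univ] at this
    suffices e : (fun s : ℝ => f (x + s • v)) = f ∘ (AffineMap.lineMap x y : ℝ →ᵃ[ℝ] E) by rw [e]; exact this
    funext s
    simp only [Function.comp_apply, AffineMap.lineMap_apply_module]
    congr 1
    module
  have hd : HasDerivAt (fun s : ℝ => f (x + s • v)) ⟪g x, v⟫ 0 := by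
    refine aux_line_hasDerivAt f x v 0 (g x) ?_
    simpa using hdiff x
  have hslope := hφ.le_slope_of_hasDerivAt (Set.mem_univ (0:ℝ)) (Set.mem_univ 1)
    zero_lt_one hd
  rw [slope_def_field] at hslope
  simp only [div_one, one_smul, zero_smul, add_zero] at hslope
  have h1 : x + v = y := by rw [hv]; abel
  rw [h1] at hslope
  simp [slope] at hslope
  linarith [hslope]

lemma aux_descent (f : E → ℝ) (g : E → E) (L : ℝ) (hL : 0 ≤ L)
    (hdiff : ∀ x, HasGradientAt f (g x) x)
    (hlip : ∀ x y, ‖g x - g y‖ ≤ L * ‖x - y‖) (x y : E) :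
    f y ≤ f x + ⟪g x, y - x⟫ + L / 2 * ‖y - x‖ ^ 2 := by
  set v := y - x with hv
  set h : ℝ → ℝ := fun t => f (x + t • v) - t * ⟪g x, v⟫ - L / 2 * t ^ 2 * ‖v‖ ^ 2 with hh
  have hd : ∀ t : ℝ, HasDerivAt h
      (⟪g (x + t • v), v⟫ - ⟪g x, v⟫ - L * t * ‖v‖ ^ 2) t := by
    intro t
    have h1 := aux_line_hasDerivAt f x v t (g (x + t • v)) (hdiff _)
    have h2 : HasDerivAt (fun t : ℝ => t * ⟪g x, v⟫) ⟪g x, v⟫ t := by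
      simpa using (hasDerivAt_id t).mul_const (⟪g x, v⟫)
    have h3 : HasDerivAt (fun t : ℝ => L / 2 * t ^ 2 * ‖v‖ ^ 2) (L * t * ‖v‖ ^ 2) t := by
      have h4 := ((hasDerivAt_pow 2 t).const_mul (L / 2)).mul_const (‖v‖ ^ 2)
      refine h4.congr_deriv ?_
      ring
    simpa [hh, Pi.sub_def] using (h1.sub h2).sub h3
  have hanti : AntitoneOn h (Set.Icc 0 1) := by
    apply antitoneOn_of_deriv_nonpos (convex_Icc 0 1)
    · exact (Differentiable.continuous fun t => (hd t).differentiableAt).continuousOn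
    · exact fun t _ => (hd t).differentiableAt.differentiableWithinAt
    · intro t ht
      rw [interior_Icc] at ht
      rw [(hd t).deriv]
      have hb : ⟪g (x + t • v), v⟫ - ⟪g x, v⟫ ≤ L * t * ‖v‖ ^ 2 := by
        have e1 : ⟪g (x + t • v), v⟫ - ⟪g x, v⟫ = ⟪g (x + t • v) - g x, v⟫ := by
          rw [inner_sub_left]
        rw [e1]
        calc ⟪g (x + t • v) - g x, v⟫ ≤ ‖g (x + t • v) - g x‖ * ‖v‖ :=
              real_inner_le_norm _ _
          _ ≤ (L * ‖(x + t • v) - x‖) * ‖v‖ := by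
              apply mul_le_mul_of_nonneg_right (hlip _ _) (norm_nonneg _)
          _ = L * t * ‖v‖ ^ 2 := by
              have : (x + t • v) - x = t • v := by abel
              rw [this, norm_smul]
              simp [abs_of_pos ht.1]
              ring
      linarith
  have h10 := hanti (Set.mem_Icc.2 ⟨le_refl 0, zero_le_one⟩)
    (Set.mem_Icc.2 ⟨zero_le_one, le_refl 1⟩) zero_le_one
  have e0 : h 0 = f x := by simp [hh]
  have hx1 : x + (1:ℝ) • v = y := by rw [hv]; simp
  have e1 : h 1 = f y - ⟪g x, v⟫ - L / 2 * ‖v‖ ^ 2 := by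
    simp only [hh]
    rw [hx1]
    ring
  rw [e0, e1] at h10
  linarith

lemma aux_coco (f : E → ℝ) (g : E → E) (L : ℝ) (hL : 0 ≤ L)
    (hconv : ConvexOn ℝ Set.univ f)
    (hdiff : ∀ x, HasGradientAt f (g x) x)
    (hlip : ∀ x y, ‖g x - g y‖ ≤ L * ‖x - y‖) (x y : E) :
    ‖g x - g y‖ ^ 2 ≤ 2 * L * (f x - f y - ⟪g y, x - y⟫) := by
  rcases eq_or_lt_of_le hL with hL0 | hLpos
  · have h0 : ‖g x - g y‖ ≤ 0 := by simpa [← hL0] using hlip x y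
    have h1 : ‖g x - g y‖ = 0 := le_antisymm h0 (norm_nonneg _)
    rw [h1, ← hL0]
    norm_num
  · set φ : E → ℝ := fun z => f z - ⟪g y, z⟫ with hφ
    set gφ : E → E := fun z => g z - g y with hgφ
    have hφdiff : ∀ z, HasGradientAt φ (gφ z) z := by
      intro z
      have h1 := (hdiff z).hasFDerivAt
      have h2 : HasFDerivAt (fun z : E => ⟪g y, z⟫)
          (InnerProductSpace.toDual ℝ E (g y) : E →L[ℝ] ℝ) z :=
        (InnerProductSpace.toDual ℝ E (g y)).hasFDerivAt
      have h3 := h1.sub h2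
      rw [hasGradientAt_iff_hasFDerivAt]
      simpa [hφ, hgφ, map_sub, Pi.sub_def] using h3
    have hφlip : ∀ a b, ‖gφ a - gφ b‖ ≤ L * ‖a - b‖ := by
      intro a b
      simpa [hgφ, sub_sub_sub_cancel_right] using hlip a b
    set z := x - (1 / L) • (gφ x) with hz
    have h1 : φ y ≤ φ z := by
      have hgi := aux_grad_ineq f g hconv hdiff y z
      have : ⟪g y, z - y⟫ = ⟪g y, z⟫ - ⟪g y, y⟫ := inner_sub_right _ _ _
      simp only [hφ]
      linarith [hgi, this.symm.le, this.le]
    have h2 : φ z ≤ φ x + ⟪gφ x, z - x⟫ + L / 2 * ‖z - x‖ ^ 2 :=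
      aux_descent φ gφ L hL hφdiff hφlip x z
    have hzx : z - x = -((1 / L) • gφ x) := by rw [hz]; abel
    have e1 : ⟪gφ x, z - x⟫ = -(1 / L) * ‖gφ x‖ ^ 2 := by
      rw [hzx, inner_neg_right, real_inner_smul_right, real_inner_self_eq_norm_sq]
      ring
    have e2 : ‖z - x‖ ^ 2 = (1 / L) ^ 2 * ‖gφ x‖ ^ 2 := by
      rw [hzx, norm_neg, norm_smul, mul_pow]
      congr 1
      rw [Real.norm_eq_abs, sq_abs]
    have hLne : L ≠ 0 := ne_of_gt hLpos
    clear_value φ gφ z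
    have key : ‖gφ x‖ ^ 2 ≤ 2 * L * (φ x - φ y) := by
      have hc : φ y ≤ φ x - 1 / (2 * L) * ‖gφ x‖ ^ 2 := by
        have : -(1 / L) * ‖gφ x‖ ^ 2 + L / 2 * ((1 / L) ^ 2 * ‖gφ x‖ ^ 2)
            = -(1 / (2 * L)) * ‖gφ x‖ ^ 2 := by
          field_simp
          ring
        rw [e1, e2] at h2
        linarith [h1, h2, this]
      have h2L : (0:ℝ) < 2 * L := by linarith
      have hmul := mul_le_mul_of_nonneg_left hc (le_of_lt h2L)
      have hexp : 2 * L * (φ x - 1 / (2 * L) * ‖gφ x‖ ^ 2)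
          = 2 * L * φ x - ‖gφ x‖ ^ 2 := by
        field_simp
      rw [hexp] at hmul
      linarith
    have efinal : φ x - φ y = f x - f y - ⟪g y, x - y⟫ := by
      simp only [hφ]
      rw [inner_sub_right]
      ring
    rw [efinal] at key
    simpa [hgφ] using key

end Aux

/-- Let F_1,…,F_N : ℝ^d → ℝ be convex differentiable with L_F-Lipschitz
gradients, F = (1/N)·Σ F_i (so ∇F = (1/N)·Σ ∇F_i), and w* a global minimizer of F.
Then for every w,
(1/N)·Σ_i ‖∇F_i(w) − ∇F(w)‖₂² ≤ 4·L_F·(F(w) − F(w*)) + 2·σ_F²,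
where σ_F² = (1/N)·Σ_i ‖∇F_i(w*)‖₂². -/
theorem stmt6 (d N : ℕ) (hN : 0 < N) (LF : ℝ) (hLF : 0 ≤ LF)
    (F : Fin N → EuclideanSpace ℝ (Fin d) → ℝ)
    (gF : Fin N → EuclideanSpace ℝ (Fin d) → EuclideanSpace ℝ (Fin d))
    (hconv : ∀ i, ConvexOn ℝ Set.univ (F i))
    (hdiff : ∀ i x, HasGradientAt (F i) (gF i x) x)
    (hlip : ∀ i x y, ‖gF i x - gF i y‖ ≤ LF * ‖x - y‖)
    (Fbar : EuclideanSpace ℝ (Fin d) → ℝ)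
    (hFbar : ∀ w, Fbar w = (1 / (N : ℝ)) * ∑ i, F i w)
    (wstar : EuclideanSpace ℝ (Fin d)) (hmin : ∀ w, Fbar wstar ≤ Fbar w)
    (σFsq : ℝ) (hσ : σFsq = (1 / (N : ℝ)) * ∑ i, ‖gF i wstar‖ ^ 2) :
    ∀ w, (1 / (N : ℝ)) * ∑ i, ‖gF i w - (1 / (N : ℝ)) • ∑ j, gF j w‖ ^ 2 ≤
      4 * LF * (Fbar w - Fbar wstar) + 2 * σFsq := by
  intro w
  have hNR : (0:ℝ) < (N : ℝ) := by exact_mod_cast hN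
  have hNne : (N : ℝ) ≠ 0 := ne_of_gt hNR
  -- gradient of Fbar at wstar is zero, i.e. ∑ gF i wstar = 0
  have hsum0 : ∑ i, gF i wstar = 0 := by
    have hF1 : HasFDerivAt (fun w : (EuclideanSpace ℝ (Fin d)) => ∑ i, F i w)
        (∑ i, (InnerProductSpace.toDual ℝ (EuclideanSpace ℝ (Fin d)) (gF i wstar) : (EuclideanSpace ℝ (Fin d)) →L[ℝ] ℝ)) wstar :=
      HasFDerivAt.fun_sum fun i _ => (hdiff i wstar).hasFDerivAt
    have hF2 : HasFDerivAt Fbar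
        ((1 / (N : ℝ)) • ∑ i, (InnerProductSpace.toDual ℝ (EuclideanSpace ℝ (Fin d)) (gF i wstar) : (EuclideanSpace ℝ (Fin d)) →L[ℝ] ℝ))
        wstar := by
      have heq : Fbar = fun w => (1 / (N : ℝ)) * ∑ i, F i w := funext hFbar
      rw [heq]
      exact hF1.const_mul _
    have hlm : IsLocalMin Fbar wstar := Filter.Eventually.of_forall hmin
    have hz := hlm.hasFDerivAt_eq_zero hF2
    have hz2 : (InnerProductSpace.toDual ℝ (EuclideanSpace ℝ (Fin d))) ((1 / (N : ℝ)) • ∑ i, gF i wstar) = 0 := by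
      rw [map_smul, map_sum]
      exact hz
    have hz3 : (1 / (N : ℝ)) • ∑ i, gF i wstar = 0 :=
      (InnerProductSpace.toDual ℝ (EuclideanSpace ℝ (Fin d))).injective (by simpa using hz2)
    have := smul_eq_zero.1 hz3
    rcases this with h | h
    · exact absurd h (by positivity)
    · exact h
  set a : Fin N → (EuclideanSpace ℝ (Fin d)) := fun i => gF i w with ha
  set b : Fin N → (EuclideanSpace ℝ (Fin d)) := fun i => gF i wstar with hb
  set abar : (EuclideanSpace ℝ (Fin d)) := (1 / (N : ℝ)) • ∑ j, gF j w with habar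
  -- variance bound
  have hvar : ∑ i, ‖a i - abar‖ ^ 2 ≤ ∑ i, ‖a i‖ ^ 2 := by
    have hexp : ∀ i : Fin N, ‖a i - abar‖ ^ 2
        = ‖a i‖ ^ 2 - 2 * ⟪a i, abar⟫ + ‖abar‖ ^ 2 := fun i => norm_sub_sq_real _ _
    have hsumin : ∑ i, ⟪a i, abar⟫ = (N : ℝ) * ‖abar‖ ^ 2 := by
      rw [← sum_inner]
      have : ∑ i, a i = (N : ℝ) • abar := by
        rw [habar, smul_smul, mul_one_div, div_self hNne, one_smul]
      rw [this, real_inner_smul_left, real_inner_self_eq_norm_sq]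
    calc ∑ i, ‖a i - abar‖ ^ 2
        = ∑ i, (‖a i‖ ^ 2 - 2 * ⟪a i, abar⟫ + ‖abar‖ ^ 2) :=
          Finset.sum_congr rfl fun i _ => hexp i
      _ = ∑ i, ‖a i‖ ^ 2 - 2 * ∑ i, ⟪a i, abar⟫ + (N : ℝ) * ‖abar‖ ^ 2 := by
          rw [Finset.sum_add_distrib, Finset.sum_sub_distrib, ← Finset.mul_sum,
            Finset.sum_const, Finset.card_univ, Fintype.card_fin, nsmul_eq_mul]
      _ = ∑ i, ‖a i‖ ^ 2 - (N : ℝ) * ‖abar‖ ^ 2 := by rw [hsumin]; ring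
      _ ≤ ∑ i, ‖a i‖ ^ 2 := by nlinarith [sq_nonneg ‖abar‖, hNR]
  -- split bound
  have hsplit : ∑ i, ‖a i‖ ^ 2 ≤ 2 * ∑ i, ‖a i - b i‖ ^ 2 + 2 * ∑ i, ‖b i‖ ^ 2 := by
    have hterm : ∀ i : Fin N, ‖a i‖ ^ 2 ≤ 2 * ‖a i - b i‖ ^ 2 + 2 * ‖b i‖ ^ 2 := by
      intro i
      have h1 : ‖a i‖ ≤ ‖a i - b i‖ + ‖b i‖ := by
        have := norm_add_le (a i - b i) (b i)
        simpa using this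
      nlinarith [norm_nonneg (a i - b i), norm_nonneg (b i),
        sq_nonneg (‖a i - b i‖ - ‖b i‖), norm_nonneg (a i)]
    calc ∑ i, ‖a i‖ ^ 2 ≤ ∑ i, (2 * ‖a i - b i‖ ^ 2 + 2 * ‖b i‖ ^ 2) :=
          Finset.sum_le_sum fun i _ => hterm i
      _ = 2 * ∑ i, ‖a i - b i‖ ^ 2 + 2 * ∑ i, ‖b i‖ ^ 2 := by
          rw [Finset.sum_add_distrib, Finset.mul_sum, Finset.mul_sum]
  -- co-coercivity bound
  have hcoco : ∑ i, ‖a i - b i‖ ^ 2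
      ≤ 2 * LF * ((N : ℝ) * Fbar w - (N : ℝ) * Fbar wstar) := by
    have hterm : ∀ i : Fin N, ‖a i - b i‖ ^ 2
        ≤ 2 * LF * (F i w - F i wstar - ⟪b i, w - wstar⟫) := fun i =>
      aux_coco (F i) (gF i) LF hLF (hconv i) (hdiff i) (hlip i) w wstar
    calc ∑ i, ‖a i - b i‖ ^ 2
        ≤ ∑ i, 2 * LF * (F i w - F i wstar - ⟪b i, w - wstar⟫) :=
          Finset.sum_le_sum fun i _ => hterm i
      _ = 2 * LF * (∑ i, F i w - ∑ i, F i wstar - ⟪∑ i, b i, w - wstar⟫) := by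
          rw [← Finset.mul_sum, Finset.sum_sub_distrib, Finset.sum_sub_distrib, sum_inner]
      _ = 2 * LF * ((N : ℝ) * Fbar w - (N : ℝ) * Fbar wstar) := by
          have e1 : ∑ i, F i w = (N : ℝ) * Fbar w := by
            rw [hFbar w]; field_simp
          have e2 : ∑ i, F i wstar = (N : ℝ) * Fbar wstar := by
            rw [hFbar wstar]; field_simp
          have e3 : ∑ i, b i = 0 := hsum0
          rw [e1, e2, e3, inner_zero_left]
          ring
  -- combine
  have hσ' : ∑ i, ‖b i‖ ^ 2 = (N : ℝ) * σFsq := by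
    rw [hσ]; field_simp; rfl
  have hchain : ∑ i, ‖a i - abar‖ ^ 2
      ≤ 4 * LF * ((N : ℝ) * Fbar w - (N : ℝ) * Fbar wstar) + 2 * ((N : ℝ) * σFsq) := by
    rw [← hσ']
    nlinarith [hvar, hsplit, hcoco]
  calc (1 / (N : ℝ)) * ∑ i, ‖gF i w - (1 / (N : ℝ)) • ∑ j, gF j w‖ ^ 2
      = (1 / (N : ℝ)) * ∑ i, ‖a i - abar‖ ^ 2 := rfl
    _ ≤ (1 / (N : ℝ)) * (4 * LF * ((N : ℝ) * Fbar w - (N : ℝ) * Fbar wstar)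
          + 2 * ((N : ℝ) * σFsq)) := by
        apply mul_le_mul_of_nonneg_left hchain
        positivity
    _ = 4 * LF * (Fbar w - Fbar wstar) + 2 * σFsq := by
        field_simp
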